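/- Let R be an almost sparse sequence. If an operator A satisfies A >_{ae} 0, then there exists m ∈ ℤ such that either A =_{ae} S^m(x) or S^m(x) <_{ae} A <_{ae} S^{m+1}(x). -/

import Mathlib

open Filter

/-- Evaluation of an operator `A(x) = ∑ z_i S^i(x)` (given by a finitely supported
family of integer coefficients) at the n-th term of the sequence r, where
`S^i(r_n) = r_{n+i}` (clamped at index 0, matching the convention S⁻¹(r_0) = r_0). -/
def opEval (r : ℕ → ℤ) (A : ℤ →₀ ℤ) (n : ℕ) : ℤ :=
  A.sum fun i c => c * r (((n : ℤ) + i).toNat)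

/-- `A >_{ae} B` : A(a) > B(a) for all but finitely many a ∈ R. -/
def AEgt (r : ℕ → ℤ) (A B : ℤ →₀ ℤ) : Prop :=
  ∀ᶠ n in atTop, opEval r B n < opEval r A n

/-- `A =_{ae} B` : A(a) = B(a) for all but finitely many a ∈ R. -/
def AEeq (r : ℕ → ℤ) (A B : ℤ →₀ ℤ) : Prop :=
  ∀ᶠ n in atTop, opEval r A n = opEval r B n

/-- R is almost sparse: (1) any two operators are ae-comparable; (2) whenever
A >_{ae} B there is Δ ≥ 0 with A(S^Δ(x)) >_{ae} B(S^Δ(x)) + x. -/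
def AlmostSparse (r : ℕ → ℤ) : Prop :=
  (∀ A B : ℤ →₀ ℤ, AEgt r A B ∨ AEgt r B A ∨ AEeq r A B) ∧
  (∀ A B : ℤ →₀ ℤ, AEgt r A B →
    ∃ Δ : ℕ, ∀ᶠ n in atTop, opEval r B (n + Δ) + r n < opEval r A (n + Δ))

lemma opEval_single (r : ℕ → ℤ) (m : ℤ) (n : ℕ) :
    opEval r (Finsupp.single m 1) n = r (((n : ℤ) + m).toNat) := by
  have h : opEval r (Finsupp.single m 1) n = 1 * r (((n : ℤ) + m).toNat) :=
    Finsupp.sum_single_index (zero_mul _)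
  rw [h, one_mul]

lemma opEval_zero (r : ℕ → ℤ) (n : ℕ) : opEval r 0 n = 0 := by
  simp [opEval]

lemma ev_shift {Q : ℕ → Prop} (c : ℕ) (h : ∀ᶠ n in atTop, Q n) :
    ∀ᶠ n in atTop, Q (n + c) :=
  (tendsto_add_atTop_nat c).eventually h

lemma r_lower (r : ℕ → ℤ) (hmono : StrictMono r) : ∀ n : ℕ, r 0 + n ≤ r n := by
  intro n
  induction n with
  | zero => simp
  | succ n ih =>
    have h := hmono (Nat.lt_succ_self n)
    simp only [Nat.succ_eq_add_one] at h
    push_cast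
    omega

lemma rpos (r : ℕ → ℤ) (hmono : StrictMono r) : ∀ᶠ n in atTop, 0 < r n := by
  rw [eventually_atTop]
  refine ⟨(1 - r 0).toNat, fun n hn => ?_⟩
  have h1 := r_lower r hmono n
  have h3 : ((1 - r 0).toNat : ℤ) ≤ (n : ℤ) := by exact_mod_cast hn
  omega

lemma double (r : ℕ → ℤ) (hmono : StrictMono r) (hs : AlmostSparse r) :
    ∃ Δ : ℕ, ∀ᶠ n in atTop, r n + r n < r (n + Δ) := by
  have h : AEgt r (Finsupp.single 1 1) (Finsupp.single 0 1) := by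
    refine Eventually.of_forall fun n => ?_
    rw [opEval_single, opEval_single]
    apply hmono
    omega
  obtain ⟨Δ, hΔ⟩ := hs.2 _ _ h
  refine ⟨Δ + 1, ?_⟩
  filter_upwards [hΔ] with n hn
  rw [opEval_single, opEval_single] at hn
  have e1 : (((n + Δ : ℕ) : ℤ) + 0).toNat = n + Δ := by omega
  have e2 : (((n + Δ : ℕ) : ℤ) + 1).toNat = n + Δ + 1 := by omega
  rw [e1, e2] at hn
  have hm : r n ≤ r (n + Δ) := hmono.monotone (Nat.le_add_right n Δ)
  have e3 : n + (Δ + 1) = n + Δ + 1 := by omega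
  rw [e3]
  linarith

lemma pow_bound (r : ℕ → ℤ) (hmono : StrictMono r) (hs : AlmostSparse r) :
    ∃ Δ : ℕ, ∀ k : ℕ, ∀ᶠ n in atTop, 2 ^ k * r n ≤ r (n + k * Δ) := by
  obtain ⟨Δ, hΔ⟩ := double r hmono hs
  refine ⟨Δ, fun k => ?_⟩
  induction k with
  | zero => simp
  | succ k ih =>
    filter_upwards [ih, ev_shift (k * Δ) hΔ] with n h1 h2
    have e : n + (k + 1) * Δ = n + k * Δ + Δ := by ring
    rw [e]
    have h4 : (2 : ℤ) ^ (k + 1) * r n = 2 ^ k * r n + 2 ^ k * r n := by ring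
    linarith

lemma upper (r : ℕ → ℤ) (hmono : StrictMono r) (hs : AlmostSparse r) (A : ℤ →₀ ℤ) :
    ∃ m : ℕ, ∀ᶠ n in atTop, opEval r A n < r (n + m) := by
  obtain ⟨Δ, hΔ⟩ := pow_bound r hmono hs
  set L : ℕ := ∑ j ∈ A.support, j.natAbs with hLdef
  set C : ℤ := ∑ j ∈ A.support, |A j| with hCdef
  have hCnn : 0 ≤ C := Finset.sum_nonneg fun _ _ => abs_nonneg _
  set k : ℕ := C.toNat + 1 with hkdef
  have hCk : C < 2 ^ k := by
    have h1 : C ≤ (C.toNat : ℤ) := Int.self_le_toNat C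
    have h2 : C.toNat < 2 ^ k := (Nat.lt_two_pow_self (n := _)).trans_le
      (Nat.pow_le_pow_right (by norm_num) (Nat.le_succ _))
    calc C ≤ (C.toNat : ℤ) := h1
      _ < ((2 ^ k : ℕ) : ℤ) := by exact_mod_cast h2
      _ = 2 ^ k := by push_cast; ring
  refine ⟨L + k * Δ, ?_⟩
  have hLmem : ∀ i ∈ A.support, i.natAbs ≤ L :=
    fun i hi => Finset.single_le_sum (f := fun j => j.natAbs) (fun _ _ => Nat.zero_le _) hi
  obtain ⟨N0, hN0⟩ := eventually_atTop.1 (rpos r hmono)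
  obtain ⟨N1, hN1⟩ := eventually_atTop.1 (hΔ k)
  rw [eventually_atTop]
  refine ⟨N0 + L + N1, fun n hn => ?_⟩
  have key : ∀ i ∈ A.support,
      0 < r (((n : ℤ) + i).toNat) ∧ ((n : ℤ) + i).toNat ≤ n + L := by
    intro i hi
    have h1 := hLmem i hi
    have h2 : N0 ≤ ((n : ℤ) + i).toNat := by omega
    exact ⟨hN0 _ h2, by omega⟩
  have hAle : opEval r A n ≤ C * r (n + L) := by
    rw [opEval, Finsupp.sum, hCdef, Finset.sum_mul]
    apply Finset.sum_le_sum
    intro i hi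
    obtain ⟨hpos, hle⟩ := key i hi
    have h1 : A i * r (((n : ℤ) + i).toNat) ≤ |A i| * r (((n : ℤ) + i).toNat) :=
      mul_le_mul_of_nonneg_right (le_abs_self _) hpos.le
    have h2 : |A i| * r (((n : ℤ) + i).toNat) ≤ |A i| * r (n + L) :=
      mul_le_mul_of_nonneg_left (hmono.monotone hle) (abs_nonneg _)
    linarith
  have hP : 0 < r (n + L) := hN0 _ (by omega)
  have h3 : C * r (n + L) < 2 ^ k * r (n + L) := mul_lt_mul_of_pos_right hCk hP
  have h4 : 2 ^ k * r (n + L) ≤ r (n + L + k * Δ) := hN1 (n + L) (by omega)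
  have e : n + (L + k * Δ) = n + L + k * Δ := by ring
  rw [e]
  linarith

/-- If R is almost sparse and an operator A satisfies A >_{ae} 0, then there is
m ∈ ℤ with A =_{ae} S^m(x) or S^m(x) <_{ae} A <_{ae} S^{m+1}(x). -/
theorem stmt6 (r : ℕ → ℤ) (hmono : StrictMono r) (hs : AlmostSparse r)
    (A : ℤ →₀ ℤ) (hA : AEgt r A 0) :
    ∃ m : ℤ, AEeq r A (Finsupp.single m 1) ∨
      (AEgt r A (Finsupp.single m 1) ∧ AEgt r (Finsupp.single (m + 1) 1) A) := by
  classical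
  obtain ⟨Δ, hΔ⟩ := hs.2 A 0 hA
  have hlow : AEgt r A (Finsupp.single (-(Δ : ℤ)) 1) := by
    rw [AEgt]
    obtain ⟨N, hN⟩ := eventually_atTop.1 hΔ
    rw [eventually_atTop]
    refine ⟨N + Δ, fun n hn => ?_⟩
    rw [opEval_single]
    have e : ((n : ℤ) + -(Δ : ℤ)).toNat = n - Δ := by omega
    rw [e]
    have h := hN (n - Δ) (by omega)
    rw [opEval_zero] at h
    have e2 : n - Δ + Δ = n := by omega
    rw [e2] at h
    linarith
  obtain ⟨mUB, hUB⟩ := upper r hmono hs A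
  set P : ℤ → Prop := fun m => AEgt r A (Finsupp.single m 1) with hPdef
  have hb : ∀ z : ℤ, P z → z ≤ (mUB : ℤ) := by
    intro z hz
    by_contra hgt
    push_neg at hgt
    have hcon : ∀ᶠ n : ℕ in atTop, False := by
      filter_upwards [hz, hUB] with n h1 h2
      rw [opEval_single] at h1
      have hle : n + mUB ≤ ((n : ℤ) + z).toNat := by omega
      have := hmono.monotone hle
      linarith
    obtain ⟨n, hn⟩ := hcon.exists
    exact hn
  obtain ⟨m₀, hm₀, hmax⟩ := Int.exists_greatest_of_bdd (P := P) ⟨(mUB : ℤ), hb⟩ ⟨-(Δ : ℤ), hlow⟩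
  rcases hs.1 A (Finsupp.single (m₀ + 1) 1) with h | h | h
  · exact absurd (hmax _ h) (by omega)
  · exact ⟨m₀, Or.inr ⟨hm₀, h⟩⟩
  · exact ⟨m₀ + 1, Or.inl h⟩
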